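/- Let F ⊆ {0,1,*}^d with D(x,y) ≥ 1 for all distinct x,y ∈ F, and suppose F is a partition, i.e., ∑_{x∈F} 2^{j(x)} = 2^d (equivalently, the subcubes H(x), x ∈ F, partition {0,1}^d). If moreover F is (d-1)-neighborly of maximum size among (d-1)-neighborly families, then the joker-free strings of F number exactly 2^{d-1} and the strings with exactly one joker number exactly 2^{d-2}. In particular every (d-1)-neighborly family of maximum size is a partition. -/

import Mathlib

open Finset

/-- Number of coordinates where one string has 0 and the other 1. -/
def Dd {d : ℕ} (x y : Fin d → Option Bool) : ℕ :=
  (univ.filter fun i => ∃ b : Bool, x i = some b ∧ y i = some !b).card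

/-- The subcube of binary strings agreeing with `x` on all non-joker coordinates. -/
def Hcube {d : ℕ} (x : Fin d → Option Bool) : Finset (Fin d → Bool) :=
  univ.filter fun u => ∀ i : Fin d, ∀ b : Bool, x i = some b → u i = b

/-- Number of joker (`*`) coordinates of `x`. -/
def jok {d : ℕ} (x : Fin d → Option Bool) : ℕ :=
  (univ.filter fun i => x i = none).card

/-- `k`-neighborly family of strings in `{0,1,*}^d`. -/
def Nbly {d : ℕ} (k : ℕ) (F : Finset (Fin d → Option Bool)) : Prop :=
  ∀ x ∈ F, ∀ y ∈ F, x ≠ y → 1 ≤ Dd x y ∧ Dd x y ≤ k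

/-- `n(k,d)`: maximum size of a `k`-neighborly family in `{0,1,*}^d`. -/
noncomputable def nbox (k d : ℕ) : ℕ :=
  sSup {n | ∃ F : Finset (Fin d → Option Bool), Nbly k F ∧ F.card = n}

/-! ### Auxiliary lemmas -/

lemma mem_Hcube {d : ℕ} (x : Fin d → Option Bool) (u : Fin d → Bool) :
    u ∈ Hcube x ↔ ∀ i : Fin d, ∀ b : Bool, x i = some b → u i = b := by
  simp [Hcube]

lemma Hcube_eq_piFinset {d : ℕ} (x : Fin d → Option Bool) :
    Hcube x = Fintype.piFinset (fun i => (x i).elim Finset.univ (fun b => {b})) := by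
  ext u
  rw [mem_Hcube, Fintype.mem_piFinset]
  constructor
  · intro h i
    cases hx : x i with
    | none => simp
    | some b => simp [h i b hx]
  · intro h i b hx
    have := h i
    rw [hx] at this
    simpa using this

lemma card_Hcube {d : ℕ} (x : Fin d → Option Bool) :
    (Hcube x).card = 2 ^ jok x := by
  classical
  rw [Hcube_eq_piFinset, Fintype.card_piFinset]
  have h : ∀ i : Fin d, ((x i).elim Finset.univ (fun b => ({b} : Finset Bool))).card
      = if x i = none then 2 else 1 := by
    intro i; cases x i <;> simp
  rw [Finset.prod_congr rfl fun i _ => h i, Finset.prod_ite]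
  simp [jok]

lemma Hcube_disjoint {d : ℕ} {x y : Fin d → Option Bool} (h : 1 ≤ Dd x y) :
    Disjoint (Hcube x) (Hcube y) := by
  rw [Finset.disjoint_left]
  intro u hux huy
  rw [Dd] at h
  obtain ⟨i, hi⟩ := Finset.card_pos.mp h
  simp only [mem_filter, mem_univ, true_and] at hi
  obtain ⟨b, hxb, hyb⟩ := hi
  rw [mem_Hcube] at hux huy
  have h1 := hux i b hxb
  have h2 := huy i (!b) hyb
  rw [h1] at h2
  cases b <;> simp at h2

lemma sum_vol_le {d : ℕ} (F : Finset (Fin d → Option Bool))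
    (h : ∀ x ∈ F, ∀ y ∈ F, x ≠ y → 1 ≤ Dd x y) :
    ∑ x ∈ F, 2 ^ jok x ≤ 2 ^ d := by
  classical
  calc ∑ x ∈ F, 2 ^ jok x = ∑ x ∈ F, (Hcube x).card := by
        exact Finset.sum_congr rfl fun x _ => (card_Hcube x).symm
  _ = (F.biUnion Hcube).card :=
        (Finset.card_biUnion (fun x hx y hy hxy => Hcube_disjoint (h x hx y hy hxy))).symm
  _ ≤ (univ : Finset (Fin d → Bool)).card := Finset.card_le_card (Finset.subset_univ _)
  _ = 2 ^ d := by simp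

/-- Joker-free strings in a `(d-1)`-neighborly family: at most half the cube. -/
lemma jokfree_bound {d : ℕ} (hd : 1 ≤ d) (F : Finset (Fin d → Option Bool))
    (hF : Nbly (d - 1) F) :
    2 * (F.filter fun x => jok x = 0).card ≤ 2 ^ d := by
  classical
  set S0 := F.filter fun x => jok x = 0 with hS0
  have hnn : ∀ x ∈ S0, ∀ i, x i ≠ none := by
    intro x hx i hi
    have h0 : jok x = 0 := (mem_filter.mp hx).2
    rw [jok, Finset.card_eq_zero] at h0
    have : i ∈ (univ.filter fun i => x i = none) := by
      simp [hi]
    rw [h0] at this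
    exact absurd this (Finset.notMem_empty i)
  set f : (Fin d → Option Bool) → (Fin d → Bool) := fun x i => (x i).getD false with hf
  have hsome : ∀ x ∈ S0, ∀ i, x i = some (f x i) := by
    intro x hx i
    cases hxi : x i with
    | none => exact absurd hxi (hnn x hx i)
    | some b => simp [hf, hxi]
  have hinj : Set.InjOn f S0 := by
    intro x hx y hy hxy
    funext i
    rw [hsome x hx i, hsome y hy i, hxy]
  set S := S0.image f with hS
  have hcardS : S.card = S0.card := Finset.card_image_of_injOn hinj
  set neg : (Fin d → Bool) → (Fin d → Bool) := fun u i => !(u i) with hneg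
  have hinvol : Function.Involutive neg := by
    intro u; funext i; simp [hneg]
  set S' := S.image neg with hS'
  have hcardS' : S'.card = S.card := Finset.card_image_of_injective _ hinvol.injective
  have hdisj : Disjoint S S' := by
    rw [Finset.disjoint_left]
    rintro u huS huS'
    obtain ⟨x, hx, hfx⟩ := Finset.mem_image.mp huS
    obtain ⟨v, hvS, hv⟩ := Finset.mem_image.mp huS'
    obtain ⟨y, hy, hfy⟩ := Finset.mem_image.mp hvS
    -- u = f x  and  u = neg (f y)
    have hui : ∀ i, x i = some (u i) := by
      intro i; rw [hsome x hx i, hfx]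
    have hvi : ∀ i, y i = some (!(u i)) := by
      intro i
      have h2 : u i = !(v i) := by rw [← hv, hneg]
      rw [hsome y hy i, hfy, h2, Bool.not_not]
    have hDd : Dd x y = d := by
      rw [Dd]
      have heq : (univ.filter fun i => ∃ b : Bool, x i = some b ∧ y i = some !b) = univ := by
        apply Finset.filter_true_of_mem
        intro i _
        exact ⟨u i, hui i, hvi i⟩
      rw [heq]
      simp
    by_cases hxy : x = y
    · have i0 : Fin d := ⟨0, hd⟩
      have h1 := hui ⟨0, hd⟩
      have h2 := hvi ⟨0, hd⟩
      rw [hxy, h2] at h1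
      have : (!(u ⟨0, hd⟩)) = u ⟨0, hd⟩ := by
        exact Option.some.inj h1
      cases hu : u ⟨0, hd⟩ <;> rw [hu] at this <;> simp at this
    · have hb := (hF x (mem_filter.mp hx).1 y (mem_filter.mp hy).1 hxy).2
      rw [hDd] at hb
      omega
  have hfin : S.card + S'.card ≤ 2 ^ d := by
    rw [← Finset.card_union_of_disjoint hdisj]
    calc (S ∪ S').card ≤ (univ : Finset (Fin d → Bool)).card :=
          Finset.card_le_card (Finset.subset_univ _)
    _ = 2 ^ d := by simp
  omega

/-! ### The extremal construction -/

def famA (e : ℕ) : Finset (Fin (e + 2) → Option Bool) :=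
  Fintype.piFinset (fun i => if i = 0 then {some false} else {some false, some true})

def famB (e : ℕ) : Finset (Fin (e + 2) → Option Bool) :=
  Fintype.piFinset (fun i =>
    if i = 0 then {some true} else if i = 1 then {none} else {some false, some true})

lemma famA_zero {e : ℕ} {x : Fin (e + 2) → Option Bool} (hx : x ∈ famA e) :
    x 0 = some false := by
  have := (Fintype.mem_piFinset.mp hx) 0
  simpa using this

lemma famA_ne_none {e : ℕ} {x : Fin (e + 2) → Option Bool} (hx : x ∈ famA e) (i : Fin (e + 2)) :
    x i ≠ none := by
  have := (Fintype.mem_piFinset.mp hx) i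
  by_cases h : i = 0
  · rw [if_pos h] at this; simp_all
  · rw [if_neg h] at this; simp at this; rcases this with h | h <;> simp [h]

lemma famB_zero {e : ℕ} {x : Fin (e + 2) → Option Bool} (hx : x ∈ famB e) :
    x 0 = some true := by
  have := (Fintype.mem_piFinset.mp hx) 0
  simpa using this

lemma one_ne_zero_fin (e : ℕ) : (1 : Fin (e + 2)) ≠ 0 := by
  intro h
  have := congrArg Fin.val h
  simp at this

lemma famB_one {e : ℕ} {x : Fin (e + 2) → Option Bool} (hx : x ∈ famB e) :
    x 1 = none := by
  have := (Fintype.mem_piFinset.mp hx) 1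
  rw [if_neg (one_ne_zero_fin e), if_pos rfl] at this
  simpa using this

lemma famB_ne_none {e : ℕ} {x : Fin (e + 2) → Option Bool} (hx : x ∈ famB e) (i : Fin (e + 2))
    (h0 : i ≠ 0) (h1 : i ≠ 1) : x i ≠ none := by
  have := (Fintype.mem_piFinset.mp hx) i
  rw [if_neg h0, if_neg h1] at this
  simp at this; rcases this with h | h <;> simp [h]

lemma Dd_le_of_fixed {d : ℕ} {x y : Fin d → Option Bool} (i0 : Fin d)
    (h : ∀ b : Bool, ¬ (x i0 = some b ∧ y i0 = some !b)) : Dd x y ≤ d - 1 := by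
  rw [Dd]
  calc (univ.filter fun i => ∃ b : Bool, x i = some b ∧ y i = some !b).card
      ≤ (univ.erase i0).card := by
        apply Finset.card_le_card
        intro i hi
        simp only [mem_filter, mem_univ, true_and] at hi
        obtain ⟨b, hb⟩ := hi
        refine Finset.mem_erase.mpr ⟨?_, Finset.mem_univ i⟩
        rintro rfl; exact h b hb
  _ = d - 1 := by
        rw [Finset.card_erase_of_mem (Finset.mem_univ i0)]
        simp

lemma Dd_pos_of_flip {d : ℕ} {x y : Fin d → Option Bool} (i : Fin d) (b : Bool)
    (hx : x i = some b) (hy : y i = some !b) : 1 ≤ Dd x y := by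
  rw [Dd]
  apply Finset.card_pos.mpr
  exact ⟨i, by simp only [mem_filter, mem_univ, true_and]; exact ⟨b, hx, hy⟩⟩

lemma flip_of_ne {x y : Option Bool} (hx : x ≠ none) (hy : y ≠ none) (hne : x ≠ y) :
    ∃ b : Bool, x = some b ∧ y = some !b := by
  cases x with
  | none => exact absurd rfl hx
  | some b =>
    cases y with
    | none => exact absurd rfl hy
    | some c =>
      refine ⟨b, rfl, ?_⟩
      cases b <;> cases c <;> simp_all

lemma nbly_construction (e : ℕ) : Nbly (e + 2 - 1) (famA e ∪ famB e) := by
  intro x hx y hy hxy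
  rw [Finset.mem_union] at hx hy
  rcases hx with hxA | hxB <;> rcases hy with hyA | hyB
  · -- both in A
    constructor
    · have : ∃ i, x i ≠ y i := by
        by_contra h
        push_neg at h
        exact hxy (funext h)
      obtain ⟨i, hi⟩ := this
      obtain ⟨b, hb1, hb2⟩ := flip_of_ne (famA_ne_none hxA i) (famA_ne_none hyA i) hi
      exact Dd_pos_of_flip i b hb1 hb2
    · apply Dd_le_of_fixed 0
      intro b ⟨h1, h2⟩
      rw [famA_zero hxA] at h1
      rw [famA_zero hyA] at h2
      cases b <;> simp_all
  · -- x in A, y in B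
    constructor
    · exact Dd_pos_of_flip 0 false (famA_zero hxA) (by rw [famB_zero hyB]; rfl)
    · apply Dd_le_of_fixed 1
      intro b ⟨_, h2⟩
      rw [famB_one hyB] at h2
      exact nomatch h2
  · -- x in B, y in A
    constructor
    · exact Dd_pos_of_flip 0 true (famB_zero hxB) (by rw [famA_zero hyA]; rfl)
    · apply Dd_le_of_fixed 1
      intro b ⟨h1, _⟩
      rw [famB_one hxB] at h1
      exact nomatch h1
  · -- both in B
    constructor
    · have : ∃ i, x i ≠ y i := by
        by_contra h
        push_neg at h
        exact hxy (funext h)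
      obtain ⟨i, hi⟩ := this
      have hi0 : i ≠ 0 := by
        rintro rfl
        rw [famB_zero hxB, famB_zero hyB] at hi
        exact hi rfl
      have hi1 : i ≠ 1 := by
        rintro rfl
        rw [famB_one hxB, famB_one hyB] at hi
        exact hi rfl
      obtain ⟨b, hb1, hb2⟩ :=
        flip_of_ne (famB_ne_none hxB i hi0 hi1) (famB_ne_none hyB i hi0 hi1) hi
      exact Dd_pos_of_flip i b hb1 hb2
    · apply Dd_le_of_fixed 0
      intro b ⟨h1, h2⟩
      rw [famB_zero hxB] at h1
      rw [famB_zero hyB] at h2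
      cases b <;> simp_all

lemma card_famA (e : ℕ) : (famA e).card = 2 ^ (e + 1) := by
  classical
  rw [famA, Fintype.card_piFinset]
  have h : ∀ i : Fin (e + 2),
      (if i = 0 then ({some false} : Finset (Option Bool)) else {some false, some true}).card
        = if i = 0 then 1 else 2 := by
    intro i; split <;> simp
  rw [Finset.prod_congr rfl fun i _ => h i, Finset.prod_ite]
  simp only [Finset.prod_const, one_pow, one_mul]
  congr 1
  have : (univ.filter fun i : Fin (e + 2) => ¬ i = 0) = univ.erase 0 := by
    ext i; simp [Finset.mem_erase, and_comm]
  rw [this, Finset.card_erase_of_mem (Finset.mem_univ 0)]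
  simp

lemma card_famB (e : ℕ) : (famB e).card = 2 ^ e := by
  classical
  have h01 : (0 : Fin (e + 2)) ≠ 1 := fun h => one_ne_zero_fin e h.symm
  rw [famB, Fintype.card_piFinset]
  have h : ∀ i : Fin (e + 2),
      (if i = 0 then ({some true} : Finset (Option Bool))
        else if i = 1 then {none} else {some false, some true}).card
        = if i = 0 ∨ i = 1 then 1 else 2 := by
    intro i
    by_cases h0 : i = 0
    · simp [h0]
    · by_cases h1 : i = 1 <;> simp [h0, h1]
  rw [Finset.prod_congr rfl fun i _ => h i, Finset.prod_ite]
  simp only [Finset.prod_const, one_pow, one_mul]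
  congr 1
  have hfe : (univ.filter fun i : Fin (e + 2) => ¬ (i = 0 ∨ i = 1))
      = (univ.erase 0).erase 1 := by
    ext i
    simp only [Finset.mem_filter, Finset.mem_univ, true_and, Finset.mem_erase]
    tauto
  rw [hfe, Finset.card_erase_of_mem, Finset.card_erase_of_mem (Finset.mem_univ 0)]
  · simp
  · exact Finset.mem_erase.mpr ⟨fun h => h01 h.symm, Finset.mem_univ 1⟩

lemma famA_famB_disjoint (e : ℕ) : Disjoint (famA e) (famB e) := by
  rw [Finset.disjoint_left]
  intro x hxA hxB
  exact famA_ne_none hxA 1 (famB_one hxB)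

/-! ### Main theorem -/

theorem stmt_15 {d : ℕ} (hd : 2 ≤ d) (F : Finset (Fin d → Option Bool))
    (hF : Nbly (d - 1) F)
    (hmax : ∀ G : Finset (Fin d → Option Bool), Nbly (d - 1) G → G.card ≤ F.card) :
    (F.filter fun x => jok x = 0).card = 2 ^ (d - 1) ∧
    (F.filter fun x => jok x = 1).card = 2 ^ (d - 2) ∧
    ∑ x ∈ F, 2 ^ jok x = 2 ^ d := by
  classical
  obtain ⟨e, rfl⟩ : ∃ e, d = e + 2 := ⟨d - 2, by omega⟩
  -- lower bound on F.card from the construction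
  have hlow : 2 ^ (e + 1) + 2 ^ e ≤ F.card := by
    have h1 := hmax (famA e ∪ famB e) (nbly_construction e)
    rw [Finset.card_union_of_disjoint (famA_famB_disjoint e), card_famA, card_famB] at h1
    exact h1
  -- notation
  set a := (F.filter fun x => jok x = 0).card with ha
  set P := F.filter fun x => ¬ jok x = 0 with hP
  set p := P.card with hp
  set V := ∑ x ∈ P, 2 ^ jok x with hV
  have hsplit : a + p = F.card := by
    rw [ha, hp, hP]
    exact Finset.card_filter_add_card_filter_not _
  have htot : ∑ x ∈ F, 2 ^ jok x = a + V := by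
    rw [← Finset.sum_filter_add_sum_filter_not F (fun x => jok x = 0)]
    congr 1
    rw [ha]
    calc ∑ x ∈ F.filter (fun x => jok x = 0), 2 ^ jok x
        = ∑ _x ∈ F.filter (fun x => jok x = 0), 1 := by
          apply Finset.sum_congr rfl
          intro x hx
          rw [(Finset.mem_filter.mp hx).2, pow_zero]
      _ = _ := by rw [Finset.sum_const, smul_eq_mul, mul_one]
  have hsum_le : a + V ≤ 2 ^ (e + 2) := by
    rw [← htot]
    exact sum_vol_le F (fun x hx y hy hxy => (hF x hx y hy hxy).1)
  have ha_le : 2 * a ≤ 2 ^ (e + 2) := jokfree_bound (by omega) F hF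
  have hV_ge : 2 * p ≤ V := by
    rw [hV, hp]
    calc 2 * P.card = ∑ _x ∈ P, 2 := by rw [Finset.sum_const, smul_eq_mul, mul_comm]
    _ ≤ ∑ x ∈ P, 2 ^ jok x := by
        apply Finset.sum_le_sum
        intro x hx
        have : 1 ≤ jok x := by
          have := (Finset.mem_filter.mp hx).2
          omega
        calc (2 : ℕ) = 2 ^ 1 := rfl
        _ ≤ 2 ^ jok x := Nat.pow_le_pow_right (by omega) this
  -- arithmetic
  have he1 : 2 ^ (e + 1) = 2 * 2 ^ e := by ring
  have he2 : 2 ^ (e + 2) = 4 * 2 ^ e := by ring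
  have hA : a = 2 ^ (e + 1) := by omega
  have hPcard : p = 2 ^ e := by omega
  have hVeq : V = 2 ^ (e + 1) := by omega
  -- each element of P has exactly one joker
  have hall : ∀ x ∈ P, jok x = 1 := by
    by_contra hcon
    push_neg at hcon
    obtain ⟨x0, hx0, hne⟩ := hcon
    have hgt : ∀ x ∈ P, 2 ≤ 2 ^ jok x := by
      intro x hx
      have : 1 ≤ jok x := by
        have := (Finset.mem_filter.mp hx).2
        omega
      calc (2 : ℕ) = 2 ^ 1 := rfl
      _ ≤ 2 ^ jok x := Nat.pow_le_pow_right (by omega) this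
    have hx0gt : 2 < 2 ^ jok x0 := by
      have h1 : 1 ≤ jok x0 := by
        have := (Finset.mem_filter.mp hx0).2
        omega
      have h2 : 2 ≤ jok x0 := by omega
      calc (2 : ℕ) < 2 ^ 2 := by norm_num
      _ ≤ 2 ^ jok x0 := Nat.pow_le_pow_right (by omega) h2
    have hlt : ∑ _x ∈ P, 2 < ∑ x ∈ P, 2 ^ jok x :=
      Finset.sum_lt_sum hgt ⟨x0, hx0, hx0gt⟩
    rw [Finset.sum_const, smul_eq_mul] at hlt
    have : P.card * 2 = 2 ^ (e + 1) := by omega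
    omega
  have hfilter1 : F.filter (fun x => jok x = 1) = P := by
    ext x
    simp only [Finset.mem_filter, hP]
    constructor
    · rintro ⟨hx, h1⟩
      exact ⟨hx, by omega⟩
    · rintro ⟨hx, h0⟩
      exact ⟨hx, hall x (Finset.mem_filter.mpr ⟨hx, h0⟩)⟩
  refine ⟨?_, ?_, ?_⟩
  · show a = 2 ^ (e + 2 - 1)
    rw [hA]
    congr 1
  · show (F.filter fun x => jok x = 1).card = 2 ^ (e + 2 - 2)
    rw [hfilter1]
    exact hPcard
  · omega
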